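/- The entire function Z₁(s) has no zero in the right half-plane Re(s) ≥ 20; that is, for every complex s with Re(s) ≥ 20 one has Z₁(s) ≠ 0. -/

import Mathlib

open Complex

noncomputable def chi (s : ℂ) : ℂ := s * (s - 1) * completedRiemannZeta₀ s + 1

noncomputable def A : ℂ := Real.pi / 3 - 1

noncomputable def f1 (s : ℂ) : ℂ :=
  (s - 1) * ((s - 1) * (3 * s - 2) * (A * s - A + 1) * chi (s + 1) * chi (3 * s)
    - (s + 1) * (s - 2) * chi s * chi (3 * s - 1)
    - 2 * (s - 1) * (s - 2) * chi s * chi (3 * s))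

noncomputable def f2 (s : ℂ) : ℂ :=
  (s - 2) * ((A * s + 3) * (s - 1) ^ 2 * chi (s + 2)
    - 2 * (s - 1) * (s - 3) * chi (s + 1)
    - (s + 2) * (s - 3) * chi s)

noncomputable def Z1 (s : ℂ) : ℂ := chi (2 * s) * f1 s - chi (2 * s - 1) * f1 (1 - s)

noncomputable def Z2 (s : ℂ) : ℂ := chi (2 * s) * f2 s - chi (2 * s - 1) * f2 (1 - s)


local notation "L" => completedRiemannZeta

lemma zeta_near {w : ℂ} (h : 19 ≤ w.re) : ‖riemannZeta w - 1‖ ≤ 1/1000 := by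
  have h1 : 1 < w.re := by linarith
  have hw0 : w ≠ 0 := by intro hc; rw [hc] at h1; norm_num [Complex.zero_re] at h1
  have hsum : Summable (fun n : ℕ => 1 / (n:ℂ) ^ w) := Complex.summable_one_div_nat_cpow.mpr h1
  have hsum1 : Summable (fun n : ℕ => 1 / ((n:ℂ)+1) ^ w) := by
    have := (summable_nat_add_iff 1).mpr hsum
    simpa using this
  have hz : riemannZeta w = ∑' n : ℕ, 1 / (n:ℂ) ^ w := zeta_eq_tsum_one_div_nat_cpow h1
  have e0 : riemannZeta w - 1 = ∑' n : ℕ, 1 / ((n:ℂ)+2) ^ w := by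
    rw [hz, Summable.tsum_eq_zero_add hsum]
    have c1 : ∑' (b:ℕ), 1/((((b:ℕ)+1):ℕ):ℂ)^w = ∑' (b:ℕ), 1/((b:ℂ)+1)^w :=
      tsum_congr (fun n => by push_cast; ring_nf)
    rw [c1, Summable.tsum_eq_zero_add hsum1]
    have c2 : ∑' (b:ℕ), 1/(((((b:ℕ)+1):ℕ):ℂ)+1)^w = ∑' (b:ℕ), 1/((b:ℂ)+2)^w :=
      tsum_congr (fun n => by push_cast; ring_nf)
    rw [c2, Nat.cast_zero, zero_cpow hw0]
    simp
  rw [e0]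
  have hb : ∀ n : ℕ, ‖1 / ((n:ℂ)+2) ^ w‖ ≤ (1/131072) * (1 / ((n:ℝ)+2)^2) := by
    intro n
    have hpos : (0:ℝ) < (n:ℝ)+2 := by positivity
    have hnorm : ‖((n:ℂ)+2) ^ w‖ = ((n:ℝ)+2) ^ w.re := by
      rw [show ((n:ℂ)+2) = (((n:ℝ)+2 : ℝ):ℂ) by push_cast; ring]
      rw [Complex.norm_cpow_eq_rpow_re_of_pos hpos]
    rw [norm_div, norm_one, hnorm]
    rw [div_le_iff₀ (by positivity)]
    have h2 : ((n:ℝ)+2) ^ (19:ℝ) ≤ ((n:ℝ)+2) ^ w.re :=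
      Real.rpow_le_rpow_of_exponent_le (by linarith) h
    have h3 : ((n:ℝ)+2)^(2:ℕ) * 131072 ≤ ((n:ℝ)+2) ^ (19:ℝ) := by
      have h4 : ((n:ℝ)+2) ^ (19:ℝ) = ((n:ℝ)+2)^(19:ℕ) := by
        rw [← Real.rpow_natCast]; norm_num
      rw [h4]
      have h5 : (2:ℝ) ≤ (n:ℝ)+2 := by
        have : (0:ℝ) ≤ (n:ℝ) := Nat.cast_nonneg n
        linarith
      have h6 : (2:ℝ)^(17:ℕ) ≤ ((n:ℝ)+2)^(17:ℕ) := by gcongr <;> linarith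
      calc ((n:ℝ)+2)^(2:ℕ) * 131072 = ((n:ℝ)+2)^(2:ℕ) * 2^(17:ℕ) := by norm_num
        _ ≤ ((n:ℝ)+2)^(2:ℕ) * ((n:ℝ)+2)^(17:ℕ) := by
              have := h6; nlinarith [sq_nonneg ((n:ℝ)+2)]
        _ = ((n:ℝ)+2)^(19:ℕ) := by ring
    calc (1:ℝ) = (1/131072) * ((1 / ((n:ℝ)+2)^2) * (((n:ℝ)+2)^(2:ℕ) * 131072)) := by
          field_simp
      _ ≤ (1/131072) * ((1 / ((n:ℝ)+2)^2) * ((n:ℝ)+2) ^ w.re) := by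
          gcongr
          exact le_trans h3 h2
      _ = 1/131072 * (1 / ((n:ℝ)+2)^2) * ((n:ℝ)+2) ^ w.re := by ring
  have hgsum : Summable (fun n : ℕ => 1 / ((n:ℝ)+2)^2) := by
    have := (summable_nat_add_iff 2).mpr hasSum_zeta_two.summable
    apply this.congr
    intro n; push_cast; ring
  have hgle : ∑' n : ℕ, 1 / ((n:ℝ)+2)^2 ≤ Real.pi^2/6 := by
    have h20 : ∑' n : ℕ, 1/((n:ℝ))^2 = Real.pi^2/6 := hasSum_zeta_two.tsum_eq
    have hs0 := hasSum_zeta_two.summable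
    rw [Summable.tsum_eq_zero_add hs0] at h20
    have hs1 : Summable (fun n : ℕ => 1/((n:ℝ)+1)^2) := by
      have := (summable_nat_add_iff 1).mpr hs0
      apply this.congr; intro n; push_cast; ring
    have c1 : ∑' (b:ℕ), 1/((((b:ℕ)+1):ℕ):ℝ)^2 = ∑' (b:ℕ), 1/((b:ℝ)+1)^2 :=
      tsum_congr (fun n => by push_cast; ring)
    rw [c1, Summable.tsum_eq_zero_add hs1] at h20
    have c2 : ∑' (b:ℕ), 1/(((((b:ℕ)+1):ℕ):ℝ)+1)^2 = ∑' (b:ℕ), 1/((b:ℝ)+2)^2 :=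
      tsum_congr (fun n => by push_cast; ring)
    rw [c2] at h20
    norm_num at h20
    have : ∑' (n:ℕ), 1 / ((n:ℝ)+2)^2 = ∑' (b:ℕ), (((b:ℝ)+2)^2)⁻¹ := by
      apply tsum_congr; intro n; rw [one_div]
    rw [this]
    nlinarith [Real.pi_gt_three]
  have hnsum : Summable (fun n : ℕ => ‖1 / ((n:ℂ)+2) ^ w‖) := by
    apply Summable.of_nonneg_of_le (fun n => norm_nonneg _) hb
    exact hgsum.mul_left _
  calc ‖∑' n : ℕ, 1 / ((n:ℂ)+2) ^ w‖ ≤ ∑' n : ℕ, ‖1 / ((n:ℂ)+2) ^ w‖ :=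
        norm_tsum_le_tsum_norm hnsum
    _ ≤ ∑' n : ℕ, (1/131072) * (1 / ((n:ℝ)+2)^2) := Summable.tsum_le_tsum hb hnsum (hgsum.mul_left _)
    _ = (1/131072) * ∑' n : ℕ, 1 / ((n:ℝ)+2)^2 := tsum_mul_left
    _ ≤ (1/131072) * (Real.pi^2/6) := by
        apply mul_le_mul_of_nonneg_left hgle; norm_num
    _ ≤ 1/1000 := by nlinarith [Real.pi_le_four, Real.pi_gt_three]

lemma beta_ofReal {a : ℝ} (ha : 1 < a) :
    betaIntegral (a:ℂ) (1/2) =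
      ((∫ x in (0:ℝ)..1, x ^ (a-1) * (1-x) ^ (-(1/2):ℝ) : ℝ) : ℂ) := by
  rw [betaIntegral, ← intervalIntegral.integral_ofReal]
  apply intervalIntegral.integral_congr
  intro x hx
  rw [Set.uIcc_of_le (by norm_num : (0:ℝ) ≤ 1)] at hx
  obtain ⟨hx0, hx1⟩ := hx
  simp only [Complex.ofReal_mul]
  rw [Complex.ofReal_cpow hx0 (a-1), Complex.ofReal_cpow (by linarith : (0:ℝ) ≤ 1-x) (-(1/2):ℝ)]
  push_cast
  norm_num

lemma beta_norm_le {z : ℂ} (hz : 1 < z.re) :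
    ‖betaIntegral z (1/2)‖ ≤ ∫ x in (0:ℝ)..1, x ^ (z.re-1) * (1-x) ^ (-(1/2):ℝ) := by
  rw [betaIntegral]
  refine (intervalIntegral.norm_integral_le_integral_norm (by norm_num)).trans_eq ?_
  apply intervalIntegral.integral_congr
  intro x hx
  rw [Set.uIcc_of_le (by norm_num : (0:ℝ) ≤ 1)] at hx
  obtain ⟨hx0, hx1⟩ := hx
  simp only [norm_mul]
  congr 1
  · rcases eq_or_lt_of_le hx0 with h | h
    · rw [← h]
      rw [show ((0:ℝ):ℂ) = 0 by norm_num, zero_cpow (by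
        intro hc
        have := congrArg Complex.re hc
        simp at this
        linarith)]
      rw [Real.zero_rpow (by intro hc; linarith)]
      simp
    · rw [Complex.norm_cpow_eq_rpow_re_of_pos h]
      simp
  · rcases eq_or_lt_of_le hx1 with h | h
    · rw [h]
      have e1 : (1:ℂ) - ((1:ℝ):ℂ) = 0 := by norm_num
      rw [e1, zero_cpow (by
        intro hc
        have := congrArg Complex.re hc
        simp at this
        norm_num at this)]
      rw [show (1:ℝ)-1 = 0 by ring, Real.zero_rpow (by norm_num)]
      simp
    · have h1x : (0:ℝ) < 1 - x := by linarith
      rw [show (1:ℂ) - (x:ℂ) = ((1-x:ℝ):ℂ) by push_cast; ring]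
      rw [Complex.norm_cpow_eq_rpow_re_of_pos h1x]
      congr 1
      simp
      norm_num


lemma real_beta_bound' {a : ℝ} (ha : 1 < a) :
    Real.Gamma a * Real.sqrt (a - 1/2) ≤ Real.Gamma (a + 1/2) := by
  have h1 : (0:ℝ) < a - 1/2 := by linarith
  have h2 : Real.Gamma a ≤ Real.Gamma (a-1/2) ^ ((1:ℝ)/2) * Real.Gamma (a+1/2) ^ ((1:ℝ)/2) := by
    have := Real.Gamma_mul_add_mul_le_rpow_Gamma_mul_rpow_Gamma
      (s := a - 1/2) (t := a + 1/2) (a := 1/2) (b := 1/2) (by linarith) (by linarith)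
      (by norm_num) (by norm_num) (by norm_num)
    have e : (1/2) * (a - 1/2) + (1/2) * (a + 1/2) = a := by ring
    rwa [e] at this
  have hg1 : 0 < Real.Gamma (a - 1/2) := Real.Gamma_pos_of_pos h1
  have hg2 : 0 < Real.Gamma (a + 1/2) := Real.Gamma_pos_of_pos (by linarith)
  have hg0 : 0 < Real.Gamma a := Real.Gamma_pos_of_pos (by linarith)
  have hrec : Real.Gamma (a + 1/2) = (a - 1/2) * Real.Gamma (a - 1/2) := by
    have := Real.Gamma_add_one (ne_of_gt h1)
    rw [show a - 1/2 + 1 = a + 1/2 by ring] at this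
    exact this
  have hsq : Real.Gamma a ^ 2 ≤ Real.Gamma (a-1/2) * Real.Gamma (a+1/2) := by
    have hr : (Real.Gamma (a-1/2) ^ ((1:ℝ)/2) * Real.Gamma (a+1/2) ^ ((1:ℝ)/2)) ^ 2
        = Real.Gamma (a-1/2) * Real.Gamma (a+1/2) := by
      rw [mul_pow, ← Real.rpow_natCast (Real.Gamma (a-1/2) ^ ((1:ℝ)/2)) 2,
        ← Real.rpow_natCast (Real.Gamma (a+1/2) ^ ((1:ℝ)/2)) 2,
        ← Real.rpow_mul hg1.le, ← Real.rpow_mul hg2.le]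
      norm_num
    calc Real.Gamma a ^ 2 ≤ (Real.Gamma (a-1/2) ^ ((1:ℝ)/2) * Real.Gamma (a+1/2) ^ ((1:ℝ)/2)) ^ 2 := by
          apply pow_le_pow_left₀ hg0.le h2
      _ = _ := hr
  have key : (Real.Gamma a * Real.sqrt (a - 1/2)) ^ 2 ≤ Real.Gamma (a + 1/2) ^ 2 := by
    rw [mul_pow, Real.sq_sqrt h1.le]
    calc Real.Gamma a ^ 2 * (a - 1/2) ≤ (Real.Gamma (a-1/2) * Real.Gamma (a+1/2)) * (a-1/2) := by
          apply mul_le_mul_of_nonneg_right hsq h1.le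
      _ = Real.Gamma (a + 1/2) ^ 2 := by rw [hrec]; ring
  nlinarith [Real.sqrt_nonneg (a - 1/2), mul_nonneg hg0.le (Real.sqrt_nonneg (a-1/2))]

lemma real_integral_eq {a : ℝ} (ha : 1 < a) :
    (∫ x in (0:ℝ)..1, x ^ (a-1) * (1-x) ^ (-(1/2):ℝ) : ℝ)
      = Real.Gamma a * Real.sqrt Real.pi / Real.Gamma (a + 1/2) := by
  have hrel : Complex.Gamma (a:ℂ) * Complex.Gamma (1/2) =
      Complex.Gamma ((a:ℂ) + 1/2) * betaIntegral (a:ℂ) (1/2) :=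
    Gamma_mul_Gamma_eq_betaIntegral (by simp; linarith) (by norm_num)
  rw [beta_ofReal ha] at hrel
  have hgh : Complex.Gamma (1/2 : ℂ) = ((Real.sqrt Real.pi : ℝ) : ℂ) := by
    rw [Complex.Gamma_one_half_eq, Real.sqrt_eq_rpow, Complex.ofReal_cpow Real.pi_pos.le]
    norm_num
  have hca : ((a:ℂ) + 1/2) = ((a + 1/2 : ℝ) : ℂ) := by push_cast; ring
  rw [hgh, hca, Complex.Gamma_ofReal, Complex.Gamma_ofReal] at hrel
  have hreal : Real.Gamma a * Real.sqrt Real.pi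
      = Real.Gamma (a + 1/2) * (∫ x in (0:ℝ)..1, x ^ (a-1) * (1-x) ^ (-(1/2):ℝ) : ℝ) := by
    exact_mod_cast hrel
  have hg2 : 0 < Real.Gamma (a + 1/2) := Real.Gamma_pos_of_pos (by linarith)
  rw [eq_div_iff hg2.ne']
  linear_combination -hreal

lemma Gamma_half_norm {z : ℂ} (hz : 1 < z.re) :
    ‖Complex.Gamma z‖ * Real.sqrt (z.re - 1/2) ≤ ‖Complex.Gamma (z + 1/2)‖ := by
  have hrel : Complex.Gamma z * Complex.Gamma (1/2) =
      Complex.Gamma (z + 1/2) * betaIntegral z (1/2) :=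
    Gamma_mul_Gamma_eq_betaIntegral (by linarith) (by norm_num)
  have hnorm := congrArg norm hrel
  rw [norm_mul, norm_mul] at hnorm
  have hgh : ‖Complex.Gamma (1/2 : ℂ)‖ = Real.sqrt Real.pi := by
    rw [Complex.Gamma_one_half_eq,
      Complex.norm_cpow_eq_rpow_re_of_pos Real.pi_pos]
    rw [Real.sqrt_eq_rpow]
    norm_num
  rw [hgh] at hnorm
  have hBle : ‖betaIntegral z (1/2)‖ ≤ Real.sqrt Real.pi / Real.sqrt (z.re - 1/2) := by
    refine (beta_norm_le hz).trans ?_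
    rw [real_integral_eq hz]
    have h1 := real_beta_bound' hz
    have hg0 : 0 < Real.Gamma z.re := Real.Gamma_pos_of_pos (by linarith)
    have hg2 : 0 < Real.Gamma (z.re + 1/2) := Real.Gamma_pos_of_pos (by linarith)
    have hs : 0 < Real.sqrt (z.re - 1/2) := Real.sqrt_pos.mpr (by linarith)
    rw [div_le_div_iff₀ hg2 hs]
    calc Real.Gamma z.re * Real.sqrt Real.pi * Real.sqrt (z.re - 1/2)
        = (Real.Gamma z.re * Real.sqrt (z.re - 1/2)) * Real.sqrt Real.pi := by ring
      _ ≤ Real.Gamma (z.re + 1/2) * Real.sqrt Real.pi := by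
          apply mul_le_mul_of_nonneg_right h1 (Real.sqrt_nonneg _)
      _ = Real.sqrt Real.pi * Real.Gamma (z.re + 1/2) := by ring
  have hs : 0 < Real.sqrt (z.re - 1/2) := Real.sqrt_pos.mpr (by linarith)
  have hπ : 0 < Real.sqrt Real.pi := Real.sqrt_pos.mpr Real.pi_pos
  have h2 : ‖Complex.Gamma z‖ * Real.sqrt Real.pi
      ≤ ‖Complex.Gamma (z + 1/2)‖ * (Real.sqrt Real.pi / Real.sqrt (z.re - 1/2)) := by
    rw [hnorm]
    apply mul_le_mul_of_nonneg_left hBle (norm_nonneg _)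
  have h3 : ‖Complex.Gamma z‖ * Real.sqrt (z.re - 1/2) * Real.sqrt Real.pi
      ≤ ‖Complex.Gamma (z + 1/2)‖ * Real.sqrt Real.pi := by
    calc ‖Complex.Gamma z‖ * Real.sqrt (z.re - 1/2) * Real.sqrt Real.pi
        = ‖Complex.Gamma z‖ * Real.sqrt Real.pi * Real.sqrt (z.re - 1/2) := by ring
      _ ≤ ‖Complex.Gamma (z + 1/2)‖ * (Real.sqrt Real.pi / Real.sqrt (z.re - 1/2))
            * Real.sqrt (z.re - 1/2) := mul_le_mul_of_nonneg_right h2 hs.le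
      _ = ‖Complex.Gamma (z + 1/2)‖ * Real.sqrt Real.pi := by
          rw [mul_assoc, div_mul_cancel₀ _ hs.ne']
  exact le_of_mul_le_mul_right h3 hπ

lemma zeta_ub {w : ℂ} (h : 19 ≤ w.re) : ‖riemannZeta w‖ ≤ 1001/1000 := by
  calc ‖riemannZeta w‖ = ‖(riemannZeta w - 1) + 1‖ := by ring_nf
    _ ≤ ‖riemannZeta w - 1‖ + ‖(1:ℂ)‖ := norm_add_le _ _
    _ ≤ 1/1000 + 1 := by
        have := zeta_near h; rw [norm_one]; linarith
    _ = 1001/1000 := by norm_num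

lemma zeta_lb {w : ℂ} (h : 19 ≤ w.re) : 999/1000 ≤ ‖riemannZeta w‖ := by
  have h1 := zeta_near h
  have h2 : ‖(1:ℂ)‖ - ‖riemannZeta w‖ ≤ ‖riemannZeta w - 1‖ := by
    have := norm_sub_norm_le (1:ℂ) (riemannZeta w)
    rw [← norm_neg (1 - riemannZeta w)] at this
    simpa [neg_sub] using this
  rw [norm_one] at h2
  linarith

lemma Lambda_factor {w : ℂ} (h : 1 < w.re) :
    L w = (Real.pi:ℂ)^(-w/2) * Complex.Gamma (w/2) * riemannZeta w := by
  rw [completedZeta_eq_tsum_of_one_lt_re h, zeta_eq_tsum_one_div_nat_cpow h]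

lemma norm_Lambda {w : ℂ} (h : 1 < w.re) :
    ‖L w‖ = Real.pi ^ (-(w.re)/2) * ‖Complex.Gamma (w/2)‖ * ‖riemannZeta w‖ := by
  rw [Lambda_factor h, norm_mul, norm_mul]
  congr 2
  rw [Complex.norm_cpow_eq_rpow_re_of_pos Real.pi_pos]
  congr 1
  simp [Complex.div_re]

lemma Lambda_ne_zero {w : ℂ} (h : 19 ≤ w.re) : L w ≠ 0 := by
  intro hc
  have h1 : 1 < w.re := by linarith
  have := norm_Lambda h1
  rw [hc, norm_zero] at this
  have hz := zeta_lb h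
  have hγ : Complex.Gamma (w/2) ≠ 0 := by
    apply Complex.Gamma_ne_zero
    intro m hm
    have he : (w/2).re = (-(m:ℂ)).re := by rw [hm]
    simp [Complex.div_re] at he
    have : (0:ℝ) ≤ (m:ℝ) := Nat.cast_nonneg m
    linarith
  have hγ' : 0 < ‖Complex.Gamma (w/2)‖ := norm_pos_iff.mpr hγ
  have hπ : (0:ℝ) < Real.pi ^ (-(w.re)/2) := Real.rpow_pos_of_pos Real.pi_pos _
  have hzz : (0:ℝ) < ‖riemannZeta w‖ := by linarith
  have := mul_pos (mul_pos hπ hγ') hzz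
  linarith


lemma Lam_half {w : ℂ} (h : 19 ≤ w.re) :
    ‖L w‖ * (Real.sqrt ((w.re - 1)/2) * 999) ≤ ‖L (w+1)‖ * (Real.sqrt Real.pi * 1001) := by
  have h1 : 1 < w.re := by linarith
  have h1' : 1 < (w+1).re := by simp; linarith
  have e1 := norm_Lambda h1
  have e2 := norm_Lambda h1'
  set P := Real.pi ^ (-(w.re)/2) with hP
  have hPpos : 0 < P := Real.rpow_pos_of_pos Real.pi_pos _
  have hπs : 0 < Real.sqrt Real.pi := Real.sqrt_pos.mpr Real.pi_pos
  have hsplit : Real.pi ^ (-((w+1).re)/2) = P * (Real.sqrt Real.pi)⁻¹ := by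
    rw [hP, show (-((w+1).re)/2) = (-(w.re)/2) + (-(1/2)) by simp; ring]
    rw [Real.rpow_add Real.pi_pos]
    congr 1
    rw [Real.rpow_neg Real.pi_pos.le, Real.sqrt_eq_rpow]
  have hG : ‖Complex.Gamma (w/2)‖ * Real.sqrt ((w.re-1)/2) ≤ ‖Complex.Gamma ((w+1)/2)‖ := by
    have := Gamma_half_norm (z := w/2) (by simp [Complex.div_re]; linarith)
    rw [show w/2 + 1/2 = (w+1)/2 by ring] at this
    rw [show (w/2).re - 1/2 = (w.re-1)/2 by simp [Complex.div_re]; try ring] at this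
    exact this
  have hZw := zeta_ub h
  have hZ1 : 999/1000 ≤ ‖riemannZeta (w+1)‖ := zeta_lb (by simp; linarith)
  have hGpos : (0:ℝ) ≤ ‖Complex.Gamma (w/2)‖ := norm_nonneg _
  have hG1pos : (0:ℝ) ≤ ‖Complex.Gamma ((w+1)/2)‖ := norm_nonneg _
  have hspos : (0:ℝ) ≤ Real.sqrt ((w.re-1)/2) := Real.sqrt_nonneg _
  calc ‖L w‖ * (Real.sqrt ((w.re-1)/2) * 999)
      = P * ((‖Complex.Gamma (w/2)‖ * Real.sqrt ((w.re-1)/2)) * ‖riemannZeta w‖) * 999 := by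
        rw [e1]; ring
    _ ≤ P * (‖Complex.Gamma ((w+1)/2)‖ * (1001/1000)) * 999 := by
        gcongr
    _ = (P * (Real.sqrt Real.pi)⁻¹ * ‖Complex.Gamma ((w+1)/2)‖ * (999/1000))
          * (Real.sqrt Real.pi * 1001) := by
        field_simp
    _ ≤ ‖L (w+1)‖ * (Real.sqrt Real.pi * 1001) := by
        rw [e2, hsplit]
        gcongr
        try positivity

lemma Lam_one {w : ℂ} (h : 19 ≤ w.re) :
    ‖L w‖ * (w.re * 999) ≤ ‖L (w+2)‖ * (Real.pi * 2 * 1001) := by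
  have h1 : 1 < w.re := by linarith
  have h1' : 1 < (w+2).re := by simp; linarith
  have hw0 : w/2 ≠ 0 := by
    intro hc
    have := congrArg Complex.re hc
    simp [Complex.div_re] at this
    linarith
  have e1 := norm_Lambda h1
  have e2 := norm_Lambda h1'
  set P := Real.pi ^ (-(w.re)/2) with hP
  have hPpos : 0 < P := Real.rpow_pos_of_pos Real.pi_pos _
  have hsplit : Real.pi ^ (-((w+2).re)/2) = P * Real.pi⁻¹ := by
    rw [hP, show (-((w+2).re)/2) = (-(w.re)/2) + (-1) by simp; try ring]
    rw [Real.rpow_add Real.pi_pos, Real.rpow_neg_one]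
  have hGrec : Complex.Gamma ((w+2)/2) = (w/2) * Complex.Gamma (w/2) := by
    rw [show (w+2)/2 = w/2 + 1 by ring]
    exact Complex.Gamma_add_one _ hw0
  have hwre : w.re / 2 ≤ ‖w/2‖ := by
    calc w.re/2 = (w/2).re := by simp [Complex.div_re]; try ring
      _ ≤ ‖w/2‖ := Complex.re_le_norm _
  have hZw := zeta_ub h
  have hZ2 : 999/1000 ≤ ‖riemannZeta (w+2)‖ := zeta_lb (by simp; linarith)
  calc ‖L w‖ * (w.re * 999)
      = P * (‖Complex.Gamma (w/2)‖ * (‖riemannZeta w‖ * w.re)) * 999 := by rw [e1]; ring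
    _ ≤ P * (‖Complex.Gamma (w/2)‖ * ((1001/1000) * (‖w/2‖*2))) * 999 := by
        gcongr <;> try linarith
    _ = (P * Real.pi⁻¹ * (‖w/2‖ * ‖Complex.Gamma (w/2)‖) * (999/1000)) * (Real.pi * 2 * 1001) := by
        have : Real.pi ≠ 0 := Real.pi_ne_zero
        field_simp
    _ ≤ ‖L (w+2)‖ * (Real.pi * 2 * 1001) := by
        rw [e2, hsplit, hGrec, norm_mul]
        gcongr
        try positivity

lemma Lam_half_num {w : ℂ} {x0 C : ℝ} (hx : x0 ≤ w.re) (h19 : 19 ≤ x0)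
    (hC : Real.sqrt Real.pi * 1001 ≤ C * (Real.sqrt ((x0-1)/2) * 999)) :
    ‖L w‖ ≤ C * ‖L (w+1)‖ := by
  have h := Lam_half (w := w) (by linarith)
  have hs0 : 0 < Real.sqrt ((x0-1)/2) := Real.sqrt_pos.mpr (by linarith)
  have hmono : Real.sqrt ((x0-1)/2) ≤ Real.sqrt ((w.re-1)/2) :=
    Real.sqrt_le_sqrt (by linarith)
  have hCpos : 0 ≤ C := by nlinarith [Real.sqrt_nonneg Real.pi, Real.sqrt_pos.mpr Real.pi_pos]
  have key : ‖L w‖ * (Real.sqrt ((x0-1)/2) * 999) ≤ (C * ‖L (w+1)‖) * (Real.sqrt ((x0-1)/2) * 999) := by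
    calc ‖L w‖ * (Real.sqrt ((x0-1)/2) * 999) ≤ ‖L w‖ * (Real.sqrt ((w.re-1)/2) * 999) := by
          gcongr
      _ ≤ ‖L (w+1)‖ * (Real.sqrt Real.pi * 1001) := h
      _ ≤ ‖L (w+1)‖ * (C * (Real.sqrt ((x0-1)/2) * 999)) := by gcongr
      _ = (C * ‖L (w+1)‖) * (Real.sqrt ((x0-1)/2) * 999) := by ring
  exact le_of_mul_le_mul_right key (by positivity)

lemma Lam_one_num {w : ℂ} {x0 C : ℝ} (hx : x0 ≤ w.re) (h19 : 19 ≤ x0)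
    (hC : Real.pi * 2 * 1001 ≤ C * (x0 * 999)) :
    ‖L w‖ ≤ C * ‖L (w+2)‖ := by
  have h := Lam_one (w := w) (by linarith)
  have hCpos : 0 ≤ C := by nlinarith [Real.pi_gt_three]
  have key : ‖L w‖ * (x0 * 999) ≤ (C * ‖L (w+2)‖) * (x0 * 999) := by
    calc ‖L w‖ * (x0 * 999) ≤ ‖L w‖ * (w.re * 999) := by gcongr
      _ ≤ ‖L (w+2)‖ * (Real.pi * 2 * 1001) := h
      _ ≤ ‖L (w+2)‖ * (C * (x0 * 999)) := by gcongr
      _ = (C * ‖L (w+2)‖) * (x0 * 999) := by ring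
  exact le_of_mul_le_mul_right key (by positivity)

lemma sqrt_pi_ub : Real.sqrt Real.pi ≤ 1.7725 := by
  rw [show (1.7725:ℝ) = Real.sqrt (1.7725^2) by rw [Real.sqrt_sq]; norm_num]
  apply Real.sqrt_le_sqrt
  nlinarith [Real.pi_lt_d6]

lemma inst1 {w : ℂ} (hx : (20:ℝ) ≤ w.re) : ‖L w‖ ≤ 0.58 * ‖L (w+1)‖ := by
  apply Lam_half_num hx (by norm_num)
  have h1 : (3.082:ℝ) ≤ Real.sqrt ((20-1)/2) := by
    rw [show ((20-1):ℝ)/2 = 9.5 by norm_num]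
    rw [show (3.082:ℝ) = Real.sqrt (3.082^2) by rw [Real.sqrt_sq]; norm_num]
    apply Real.sqrt_le_sqrt; norm_num
  nlinarith [sqrt_pi_ub]

lemma inst2 {w : ℂ} (hx : (59:ℝ) ≤ w.re) : ‖L w‖ ≤ 0.34 * ‖L (w+1)‖ := by
  apply Lam_half_num hx (by norm_num)
  have h1 : (5.385:ℝ) ≤ Real.sqrt ((59-1)/2) := by
    rw [show ((59-1):ℝ)/2 = 29 by norm_num]
    rw [show (5.385:ℝ) = Real.sqrt (5.385^2) by rw [Real.sqrt_sq]; norm_num]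
    apply Real.sqrt_le_sqrt; norm_num
  nlinarith [sqrt_pi_ub]

lemma inst3 {w : ℂ} (hx : (39:ℝ) ≤ w.re) : ‖L w‖ ≤ 0.41 * ‖L (w+1)‖ := by
  apply Lam_half_num hx (by norm_num)
  have h1 : (4.358:ℝ) ≤ Real.sqrt ((39-1)/2) := by
    rw [show ((39-1):ℝ)/2 = 19 by norm_num]
    rw [show (4.358:ℝ) = Real.sqrt (4.358^2) by rw [Real.sqrt_sq]; norm_num]
    apply Real.sqrt_le_sqrt; norm_num
  nlinarith [sqrt_pi_ub]

lemma inst4 {w : ℂ} (hx : (19:ℝ) ≤ w.re) : ‖L w‖ ≤ 0.34 * ‖L (w+2)‖ := by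
  apply Lam_one_num hx (by norm_num)
  nlinarith [Real.pi_lt_d2]

lemma inst5 {w : ℂ} (hx : (58:ℝ) ≤ w.re) : ‖L w‖ ≤ 0.11 * ‖L (w+2)‖ := by
  apply Lam_one_num hx (by norm_num)
  nlinarith [Real.pi_lt_d2]

lemma chi_eq {w : ℂ} (h0 : w ≠ 0) (h1 : w ≠ 1) :
    chi w = w * (w - 1) * L w := by
  have h : completedRiemannZeta₀ w = L w + 1/w + 1/(1-w) := by
    rw [completedRiemannZeta_eq w]; ring
  have h1' : (1:ℂ) - w ≠ 0 := by
    intro hc; apply h1; linear_combination -hc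
  rw [chi, h]
  field_simp
  ring

lemma chi_symm (w : ℂ) : chi (1 - w) = chi w := by
  simp only [chi]
  rw [completedRiemannZeta₀_one_sub]
  ring

lemma norm_scale_le {a b : ℝ} {z w : ℂ} (ha : 0 ≤ a) (hb : 0 ≤ b)
    (h : a^2 * Complex.normSq z ≤ b^2 * Complex.normSq w) : a * ‖z‖ ≤ b * ‖w‖ := by
  rw [Complex.norm_def, Complex.norm_def]
  calc a * Real.sqrt (Complex.normSq z) = Real.sqrt (a^2 * Complex.normSq z) := by
        rw [Real.sqrt_mul (sq_nonneg a), Real.sqrt_sq ha]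
    _ ≤ Real.sqrt (b^2 * Complex.normSq w) := Real.sqrt_le_sqrt h
    _ = b * Real.sqrt (Complex.normSq w) := by
        rw [Real.sqrt_mul (sq_nonneg b), Real.sqrt_sq hb]

lemma prod_bound {G X Y : ℂ} {c : ℝ} (h : ‖X‖ ≤ c * ‖Y‖) : ‖G * X‖ ≤ c * ‖G * Y‖ := by
  rw [norm_mul, norm_mul]
  calc ‖G‖ * ‖X‖ ≤ ‖G‖ * (c * ‖Y‖) := mul_le_mul_of_nonneg_left h (norm_nonneg _)
    _ = c * (‖G‖ * ‖Y‖) := by ring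

set_option maxHeartbeats 2000000 in
theorem Z1_no_zero_right (s : ℂ) (hs : 20 ≤ s.re) : Z1 s ≠ 0 := by
  have nz : ∀ z : ℂ, 0 < z.re → z ≠ 0 := by
    intro z hz hc; rw [hc] at hz; simp at hz
  have ne1 : ∀ z : ℂ, 1 < z.re → z ≠ 0 ∧ z ≠ 1 := by
    intro z hz
    refine ⟨nz z (by linarith), ?_⟩
    intro hc; rw [hc] at hz; simp at hz
  have rs1 : (s+1).re = s.re + 1 := by simp
  have rsm1 : (s-1).re = s.re - 1 := by simp
  have r3s : (3*s).re = 3*s.re := by simp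
  have r3s1 : (3*s-1).re = 3*s.re - 1 := by simp
  have r3s2 : (3*s-2).re = 3*s.re - 2 := by simp
  have r2s : (2*s).re = 2*s.re := by simp
  have r2s1 : (2*s-1).re = 2*s.re - 1 := by simp
  obtain ⟨z0s, z1s⟩ := ne1 s (by linarith)
  obtain ⟨z0a, z1a⟩ := ne1 (s+1) (by rw [rs1]; linarith)
  obtain ⟨z0b, z1b⟩ := ne1 (s-1) (by rw [rsm1]; linarith)
  obtain ⟨z0c, z1c⟩ := ne1 (3*s) (by rw [r3s]; linarith)
  obtain ⟨z0d, z1d⟩ := ne1 (3*s-1) (by rw [r3s1]; linarith)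
  obtain ⟨z0e, z1e⟩ := ne1 (3*s-2) (by rw [r3s2]; linarith)
  obtain ⟨z0f, z1f⟩ := ne1 (2*s) (by rw [r2s]; linarith)
  obtain ⟨z0g, z1g⟩ := ne1 (2*s-1) (by rw [r2s1]; linarith)
  have es := chi_eq z0s z1s
  have ea := chi_eq z0a z1a
  have eb := chi_eq z0b z1b
  have ec := chi_eq z0c z1c
  have ed := chi_eq z0d z1d
  have ee := chi_eq z0e z1e
  have ef := chi_eq z0f z1f
  have eg := chi_eq z0g z1g
  have c1 : chi (1-s+1) = chi (s-1) := by
    rw [show (1:ℂ)-s+1 = 1-(s-1) by ring, chi_symm]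
  have c2 : chi (3*(1-s)) = chi (3*s-2) := by
    rw [show (3:ℂ)*(1-s) = 1-(3*s-2) by ring, chi_symm]
  have c3 : chi (1-s) = chi s := chi_symm s
  have c4 : chi (3*(1-s)-1) = chi (3*s-1) := by
    rw [show (3:ℂ)*(1-s)-1 = 1-(3*s-1) by ring, chi_symm]
  set E1 : ℂ := (s-1) * ((2*s)*(2*s-1)*L (2*s)) * ((s-1)*(3*s-2)*(A*s-A+1) * ((s+1)*s*L (s+1)) * ((3*s)*(3*s-1)*L (3*s))) with hE1
  set E2 : ℂ := (s-1) * ((2*s)*(2*s-1)*L (2*s)) * ((s+1)*(s-2) * (s*(s-1)*L s) * ((3*s-1)*(3*s-2)*L (3*s-1))) with hE2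
  set E3 : ℂ := (s-1) * ((2*s)*(2*s-1)*L (2*s)) * (2*(s-1)*(s-2) * (s*(s-1)*L s) * ((3*s)*(3*s-1)*L (3*s))) with hE3
  set F1 : ℂ := s * ((2*s-1)*(2*s-2)*L (2*s-1)) * (s*(3*s-1)*(1-A*s) * ((s-1)*(s-2)*L (s-1)) * ((3*s-2)*(3*s-3)*L (3*s-2))) with hF1
  set F2 : ℂ := s * ((2*s-1)*(2*s-2)*L (2*s-1)) * ((s-2)*(s+1) * (s*(s-1)*L s) * ((3*s-1)*(3*s-2)*L (3*s-1))) with hF2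
  set F3 : ℂ := s * ((2*s-1)*(2*s-2)*L (2*s-1)) * (2*s*(s+1) * (s*(s-1)*L s) * ((3*s-2)*(3*s-3)*L (3*s-2))) with hF3
  have hZ : Z1 s = E1 - E2 - E3 + F1 - F2 - F3 := by
    rw [hE1, hE2, hE3, hF1, hF2, hF3]
    simp only [Z1, f1]
    rw [c1, c2, c3, c4, es, ea, eb, ec, ed, ee, ef, eg]
    ring
  -- Lambda comparison instances
  have iA : ‖L s‖ ≤ 0.58 * ‖L (s+1)‖ := inst1 (by linarith)
  have iB : ‖L (3*s-1)‖ ≤ 0.34 * ‖L (3*s)‖ := by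
    have := inst2 (w := 3*s-1) (by rw [r3s1]; linarith)
    rwa [show 3*s-1+1 = 3*s by ring] at this
  have iC : ‖L (2*s-1)‖ ≤ 0.41 * ‖L (2*s)‖ := by
    have := inst3 (w := 2*s-1) (by rw [r2s1]; linarith)
    rwa [show 2*s-1+1 = 2*s by ring] at this
  have iD : ‖L (s-1)‖ ≤ 0.34 * ‖L (s+1)‖ := by
    have := inst4 (w := s-1) (by rw [rsm1]; linarith)
    rwa [show s-1+2 = s+1 by ring] at this
  have iE : ‖L (3*s-2)‖ ≤ 0.11 * ‖L (3*s)‖ := by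
    have := inst5 (w := 3*s-2) (by rw [r3s2]; linarith)
    rwa [show 3*s-2+2 = 3*s by ring] at this
  -- polynomial norm facts
  have nsq : ∀ z : ℂ, Complex.normSq z = z.re^2 + z.im^2 := by
    intro z; rw [Complex.normSq_apply]; ring
  have n1 : ‖s-2‖ ≤ ‖s‖ := by
    have := norm_scale_le (z := s-2) (w := s) (a := 1) (b := 1) zero_le_one zero_le_one (by
      rw [nsq, nsq]; simp; nlinarith [sq_nonneg s.im])
    simpa using this
  have n2 : ‖s-2‖ ≤ ‖s+1‖ := by
    have := norm_scale_le (z := s-2) (w := s+1) (a := 1) (b := 1) zero_le_one zero_le_one (by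
      rw [nsq, nsq]; simp; nlinarith [sq_nonneg s.im])
    simpa using this
  have n3 : ‖s-1‖ ≤ 0.34 * ‖3*s-2‖ := by
    have := norm_scale_le (z := s-1) (w := 3*s-2) (a := 1) (b := 0.34) zero_le_one (by norm_num) (by
      rw [nsq, nsq, r3s2, show (3*s-2).im = 3*s.im by simp]; rw [rsm1, show (s-1).im = s.im by simp]
      nlinarith [sq_nonneg s.im])
    simpa using this
  have n5 : 3 * ‖s-1‖ ≤ ‖3*s-1‖ := by
    have := norm_scale_le (z := s-1) (w := 3*s-1) (a := 3) (b := 1) (by norm_num) zero_le_one (by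
      rw [nsq, nsq, r3s1, show (3*s-1).im = 3*s.im by simp]; rw [rsm1, show (s-1).im = s.im by simp]
      nlinarith [sq_nonneg s.im])
    simpa using this
  have hAre : (A*s-A+1).re = (Real.pi/3-1)*s.re - (Real.pi/3-1) + 1 := by
    have hA1 : A.re = Real.pi/3-1 := by simp [A]
    have hA2 : A.im = 0 := by simp [A]
    simp [Complex.mul_re, hA1, hA2]
  have n6 : (1.89:ℝ) ≤ ‖A*s-A+1‖ := by
    have h1 : (1.89:ℝ) ≤ (A*s-A+1).re := by
      rw [hAre]; nlinarith [Real.pi_gt_d6]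
    calc (1.89:ℝ) ≤ (A*s-A+1).re := h1
      _ ≤ ‖A*s-A+1‖ := Complex.re_le_norm _
  have n7 : ‖1-A*s‖ ≤ 2.06 * ‖A*s-A+1‖ := by
    have t1 : (1:ℂ)-A*s = -(A*s-A+1) + (2-A) := by ring
    have t2 : ‖(2:ℂ)-A‖ ≤ 2 := by
      have := norm_scale_le (z := 2-A) (w := (2:ℂ)) (a := 1) (b := 1) zero_le_one zero_le_one (by
        rw [nsq, nsq]
        have hA1 : A.re = Real.pi/3-1 := by simp [A]
        have hA2 : A.im = 0 := by simp [A]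
        simp [hA1, hA2]
        nlinarith [Real.pi_gt_three, Real.pi_lt_d2])
      simpa using this
    calc ‖(1:ℂ)-A*s‖ = ‖-(A*s-A+1) + (2-A)‖ := by rw [t1]
      _ ≤ ‖-(A*s-A+1)‖ + ‖(2:ℂ)-A‖ := norm_add_le _ _
      _ = ‖A*s-A+1‖ + ‖(2:ℂ)-A‖ := by rw [norm_neg]
      _ ≤ ‖A*s-A+1‖ + 2 := by linarith
      _ ≤ 2.06 * ‖A*s-A+1‖ := by linarith [n6]
  have h3s : ‖(3:ℂ)*s‖ = 3*‖s‖ := by rw [norm_mul]; simp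
  have n4 : ‖s-1‖ ≤ ‖s‖ := by
    have := norm_scale_le (z := s-1) (w := s) (a := 1) (b := 1) zero_le_one zero_le_one (by
      rw [nsq, nsq]; simp; nlinarith [sq_nonneg s.im])
    simpa using this
  have h2n : ‖(2:ℂ)‖ = 2 := by simp
  have h3n : ‖(3:ℂ)‖ = 3 := by simp
  -- pair bounds
  have hp2 : ‖E2‖ ≤ 0.04 * ‖E1‖ := by
    have hfa : E2 = ((s-1) * ((2*s)*(2*s-1)*L (2*s)) * ((s+1)*(s-1)*s*(3*s-1)*(3*s-2)))
        * ((s-2) * (L s * L (3*s-1))) := by rw [hE2]; ring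
    have hfb : E1 = ((s-1) * ((2*s)*(2*s-1)*L (2*s)) * ((s+1)*(s-1)*s*(3*s-1)*(3*s-2)))
        * (((A*s-A+1) * (3*s)) * (L (s+1) * L (3*s))) := by rw [hE1]; ring
    rw [hfa, hfb]
    apply prod_bound
    simp only [norm_mul]
    calc ‖s-2‖ * (‖L s‖ * ‖L (3*s-1)‖)
        ≤ ‖s‖ * ((0.58 * ‖L (s+1)‖) * (0.34 * ‖L (3*s)‖)) := by
          gcongr <;> first | exact n1 | exact iA | exact iB
      _ = 0.1972 * (‖s‖ * (‖L (s+1)‖ * ‖L (3*s)‖)) := by ring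
      _ ≤ (0.04*(1.89*3)) * (‖s‖ * (‖L (s+1)‖ * ‖L (3*s)‖)) :=
          mul_le_mul_of_nonneg_right (by norm_num) (by positivity)
      _ = 0.04 * ((1.89 * (‖(3:ℂ)‖*‖s‖)) * (‖L (s+1)‖ * ‖L (3*s)‖)) := by rw [h3n]; ring
      _ ≤ 0.04 * ((‖A*s-A+1‖ * (‖(3:ℂ)‖*‖s‖)) * (‖L (s+1)‖ * ‖L (3*s)‖)) := by
          gcongr
      _ = ‖A*s-A+1‖ * (‖(3:ℂ)‖*‖s‖) * (‖L (s+1)‖ * ‖L (3*s)‖) * 0.04⁻¹⁻¹ := by ring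
      _ = 0.04 * (‖A*s-A+1‖ * (‖(3:ℂ)‖ * ‖s‖) * (‖L (s+1)‖ * ‖L (3*s)‖)) := by norm_num; ring
  have hp3 : ‖E3‖ ≤ 0.21 * ‖E1‖ := by
    have hfa : E3 = ((s-1)*(s-1) * ((2*s)*(2*s-1)*L (2*s)) * (s * ((3*s)*(3*s-1)*L (3*s))))
        * ((2*(s-1)*(s-2)) * L s) := by rw [hE3]; ring
    have hfb : E1 = ((s-1)*(s-1) * ((2*s)*(2*s-1)*L (2*s)) * (s * ((3*s)*(3*s-1)*L (3*s))))
        * (((3*s-2)*(A*s-A+1)*(s+1)) * L (s+1)) := by rw [hE1]; ring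
    rw [hfa, hfb]
    apply prod_bound
    simp only [norm_mul]
    calc ‖(2:ℂ)‖ * ‖s-1‖ * ‖s-2‖ * ‖L s‖
        = 2 * (‖s-1‖ * (‖s-2‖ * ‖L s‖)) := by rw [h2n]; ring
      _ ≤ 2 * ((0.34 * ‖3*s-2‖) * (‖s+1‖ * (0.58 * ‖L (s+1)‖))) := by
          gcongr <;> first | exact n3 | exact n2 | exact iA
      _ = 0.3944 * (‖3*s-2‖ * (‖s+1‖ * ‖L (s+1)‖)) := by ring
      _ ≤ (0.21*1.89) * (‖3*s-2‖ * (‖s+1‖ * ‖L (s+1)‖)) :=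
          mul_le_mul_of_nonneg_right (by norm_num) (by positivity)
      _ = 0.21 * (‖3*s-2‖ * (1.89 * (‖s+1‖ * ‖L (s+1)‖))) := by ring
      _ ≤ 0.21 * (‖3*s-2‖ * (‖A*s-A+1‖ * (‖s+1‖ * ‖L (s+1)‖))) := by gcongr
      _ = 0.21 * (‖3*s-2‖ * ‖A*s-A+1‖ * ‖s+1‖ * ‖L (s+1)‖) := by ring
  have hp4 : ‖F1‖ ≤ 0.04 * ‖E1‖ := by
    have hfa : F1 = (2*3*s*(2*s-1)*(s-1)*(s-1)*(3*s-1)*(3*s-2))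
        * (((1-A*s)*(s-2)*(s-1)*s) * (L (2*s-1) * (L (s-1) * L (3*s-2)))) := by rw [hF1]; ring
    have hfb : E1 = (2*3*s*(2*s-1)*(s-1)*(s-1)*(3*s-1)*(3*s-2))
        * (((A*s-A+1)*(s+1)*s*s) * (L (2*s) * (L (s+1) * L (3*s)))) := by rw [hE1]; ring
    rw [hfa, hfb]
    apply prod_bound
    simp only [norm_mul]
    calc ‖1-A*s‖ * ‖s-2‖ * ‖s-1‖ * ‖s‖ * (‖L (2*s-1)‖ * (‖L (s-1)‖ * ‖L (3*s-2)‖))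
        ≤ (2.06 * ‖A*s-A+1‖) * ‖s+1‖ * ‖s‖ * ‖s‖
            * ((0.41 * ‖L (2*s)‖) * ((0.34 * ‖L (s+1)‖) * (0.11 * ‖L (3*s)‖))) := by
          gcongr <;> first | exact n7 | exact n2 | exact n4 | exact iC | exact iD | exact iE
      _ = (2.06*0.41*0.34*0.11) * (‖A*s-A+1‖ * ‖s+1‖ * ‖s‖ * ‖s‖
            * (‖L (2*s)‖ * (‖L (s+1)‖ * ‖L (3*s)‖))) := by ring
      _ ≤ 0.04 * (‖A*s-A+1‖ * ‖s+1‖ * ‖s‖ * ‖s‖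
            * (‖L (2*s)‖ * (‖L (s+1)‖ * ‖L (3*s)‖))) :=
          mul_le_mul_of_nonneg_right (by norm_num) (by positivity)
  have hp5 : ‖F2‖ ≤ 0.015 * ‖E1‖ := by
    have hfa : F2 = (2*s*(2*s-1)*(s-1)*(s-1)*(s+1)*(3*s-1)*(3*s-2))
        * (((s-2)*s) * (L (2*s-1) * (L s * L (3*s-1)))) := by rw [hF2]; ring
    have hfb : E1 = (2*s*(2*s-1)*(s-1)*(s-1)*(s+1)*(3*s-1)*(3*s-2))
        * (((A*s-A+1)*3*s*s) * (L (2*s) * (L (s+1) * L (3*s)))) := by rw [hE1]; ring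
    rw [hfa, hfb]
    apply prod_bound
    simp only [norm_mul]
    calc ‖s-2‖ * ‖s‖ * (‖L (2*s-1)‖ * (‖L s‖ * ‖L (3*s-1)‖))
        ≤ ‖s‖ * ‖s‖ * ((0.41 * ‖L (2*s)‖) * ((0.58 * ‖L (s+1)‖) * (0.34 * ‖L (3*s)‖))) := by
          gcongr <;> first | exact n1 | exact iC | exact iA | exact iB
      _ = (0.41*0.58*0.34) * (‖s‖ * ‖s‖ * (‖L (2*s)‖ * (‖L (s+1)‖ * ‖L (3*s)‖))) := by ring
      _ ≤ (0.015*(1.89*3)) * (‖s‖ * ‖s‖ * (‖L (2*s)‖ * (‖L (s+1)‖ * ‖L (3*s)‖))) :=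
          mul_le_mul_of_nonneg_right (by norm_num) (by positivity)
      _ = 0.015 * ((1.89 * ‖(3:ℂ)‖ * ‖s‖ * ‖s‖) * (‖L (2*s)‖ * (‖L (s+1)‖ * ‖L (3*s)‖))) := by
          rw [h3n]; ring
      _ ≤ 0.015 * ((‖A*s-A+1‖ * ‖(3:ℂ)‖ * ‖s‖ * ‖s‖) * (‖L (2*s)‖ * (‖L (s+1)‖ * ‖L (3*s)‖))) := by
          gcongr
      _ = 0.015 * (‖A*s-A+1‖ * ‖(3:ℂ)‖ * ‖s‖ * ‖s‖ * (‖L (2*s)‖ * (‖L (s+1)‖ * ‖L (3*s)‖))) := by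
          ring
  have hp6 : ‖F3‖ ≤ 0.01 * ‖E1‖ := by
    have hfa : F3 = (2*3*s*s*s*(2*s-1)*(s-1)*(s-1)*(s+1)*(3*s-2))
        * ((2*(s-1)) * (L (2*s-1) * (L s * L (3*s-2)))) := by rw [hF3]; ring
    have hfb : E1 = (2*3*s*s*s*(2*s-1)*(s-1)*(s-1)*(s+1)*(3*s-2))
        * (((A*s-A+1)*(3*s-1)) * (L (2*s) * (L (s+1) * L (3*s)))) := by rw [hE1]; ring
    rw [hfa, hfb]
    apply prod_bound
    simp only [norm_mul]
    have n5' : ‖(2:ℂ)‖ * ‖s-1‖ ≤ (2/3) * ‖3*s-1‖ := by rw [h2n]; linarith [n5]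
    calc ‖(2:ℂ)‖ * ‖s-1‖ * (‖L (2*s-1)‖ * (‖L s‖ * ‖L (3*s-2)‖))
        ≤ ((2/3) * ‖3*s-1‖) * ((0.41 * ‖L (2*s)‖) * ((0.58 * ‖L (s+1)‖) * (0.11 * ‖L (3*s)‖))) := by
          gcongr <;> first | exact n5' | exact iC | exact iA | exact iE
      _ = (2/3*0.41*0.58*0.11) * (‖3*s-1‖ * (‖L (2*s)‖ * (‖L (s+1)‖ * ‖L (3*s)‖))) := by ring
      _ ≤ (0.01*1.89) * (‖3*s-1‖ * (‖L (2*s)‖ * (‖L (s+1)‖ * ‖L (3*s)‖))) :=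
          mul_le_mul_of_nonneg_right (by norm_num) (by positivity)
      _ = 0.01 * ((1.89 * ‖3*s-1‖) * (‖L (2*s)‖ * (‖L (s+1)‖ * ‖L (3*s)‖))) := by ring
      _ ≤ 0.01 * ((‖A*s-A+1‖ * ‖3*s-1‖) * (‖L (2*s)‖ * (‖L (s+1)‖ * ‖L (3*s)‖))) := by gcongr
  -- E1 is nonzero
  have l1 : L (2*s) ≠ 0 := Lambda_ne_zero (by rw [r2s]; linarith)
  have l2 : L (s+1) ≠ 0 := Lambda_ne_zero (by rw [rs1]; linarith)
  have l3 : L (3*s) ≠ 0 := Lambda_ne_zero (by rw [r3s]; linarith)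
  have hAne : A*s-A+1 ≠ 0 := by
    intro hc; rw [hc, norm_zero] at n6; linarith
  have hne : E1 ≠ 0 := by
    rw [hE1]
    exact mul_ne_zero (mul_ne_zero z0b (mul_ne_zero (mul_ne_zero z0f z0g) l1))
      (mul_ne_zero (mul_ne_zero (mul_ne_zero (mul_ne_zero z0b z0e) hAne)
        (mul_ne_zero (mul_ne_zero z0a z0s) l2)) (mul_ne_zero (mul_ne_zero z0c z0d) l3))
  have hEpos : 0 < ‖E1‖ := norm_pos_iff.mpr hne
  intro hc
  have h9 : ‖E1 - Z1 s‖ ≤ 0.315 * ‖E1‖ := by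
    rw [hZ, show E1 - (E1 - E2 - E3 + F1 - F2 - F3) = E2 + E3 - F1 + F2 + F3 by ring]
    calc ‖E2 + E3 - F1 + F2 + F3‖
        ≤ ‖E2 + E3 - F1 + F2‖ + ‖F3‖ := norm_add_le _ _
      _ ≤ ‖E2 + E3 - F1‖ + ‖F2‖ + ‖F3‖ := by linarith [norm_add_le (E2+E3-F1) F2]
      _ ≤ ‖E2 + E3‖ + ‖F1‖ + ‖F2‖ + ‖F3‖ := by linarith [norm_sub_le (E2+E3) F1]
      _ ≤ ‖E2‖ + ‖E3‖ + ‖F1‖ + ‖F2‖ + ‖F3‖ := by linarith [norm_add_le E2 E3]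
      _ ≤ 0.315 * ‖E1‖ := by linarith [hp2, hp3, hp4, hp5, hp6]
  rw [hc, sub_zero] at h9
  linarith
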